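/- arXiv:1208.1118 — 2 statements merged into one kernel-verified Lean document; each statement's English description precedes it below -/
import Mathlib

section
/- Let k be an algebraically closed field, fix integers n ≥ 3 and 1 ≤ b ≤ n−1, and let l, m be positive integers with m ≤ l+1. Let L_1, …, L_m be pairwise distinct b-dimensional linear subspaces of P^n_k all containing a common (b−1)-dimensional linear subspace, with homogeneous ideals I_1, …, I_m in S = k[x_0,…,x_n]. Then dim_k (S/(I_1 ∩ ⋯ ∩ I_m))_l ≥ A_b(l,m); equivalently, the space of degree-l forms vanishing on L_1 ∪ ⋯ ∪ L_m has codimension at least A_b(l,m) in k[x_0,…,x_n]_l. -/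
open MvPolynomial

noncomputable section ModuliOfSingularHypersurfaces

/-! ### Basic framework: Zariski topology on spaces of forms, ideals as subschemes. -/

/-- A point of affine space (a coordinate function) determines a prime ideal of the
polynomial ring, namely the kernel of the evaluation map.  This realizes affine space
inside the prime spectrum. -/
def coordPt {k : Type*} [Field k] {σ : Type*} (c : σ → k) :
    PrimeSpectrum (MvPolynomial σ k) :=
  ⟨RingHom.ker (MvPolynomial.aeval c).toRingHom, RingHom.ker_isPrime _⟩

/-- The Zariski topology on a space of multivariate polynomials (viewed as the affine
space of coefficients), induced from the prime spectrum of the ring of polynomial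
functions on the coefficients. -/
def coeffTopology (k : Type*) [Field k] (N : ℕ) :
    TopologicalSpace (MvPolynomial (Fin N) k) :=
  TopologicalSpace.induced
    (fun F => coordPt (fun s : (Fin N →₀ ℕ) => MvPolynomial.coeff s F)) inferInstance

/-- The Zariski topology on a submodule of the space of polynomials. -/
def submodTop {k : Type*} [Field k] {N : ℕ} (W : Submodule k (MvPolynomial (Fin N) k)) :
    TopologicalSpace W :=
  (coeffTopology k N).induced Subtype.val

/-- The Zariski topology on the projectivization of a space of polynomials (the quotient
topology from the punctured cone). -/
def projTop {k : Type*} [Field k] {N : ℕ} (W : Submodule k (MvPolynomial (Fin N) k)) :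
    TopologicalSpace (Projectivization k W) :=
  TopologicalSpace.coinduced
    (fun v : {w : W // w ≠ 0} => Projectivization.mk k v.1 v.2)
    ((submodTop W).induced Subtype.val)

/-- The Zariski topology on affine space `k^N`. -/
def affTop (k : Type*) [Field k] (N : ℕ) : TopologicalSpace (Fin N → k) :=
  TopologicalSpace.induced (fun p => coordPt p) inferInstance

/-- The Zariski topology on the projective space of lines in `k^N`. -/
def projSpaceTop (k : Type*) [Field k] (N : ℕ) :
    TopologicalSpace (Projectivization k (Fin N → k)) :=
  TopologicalSpace.coinduced
    (fun v : {w : Fin N → k // w ≠ 0} => Projectivization.mk k v.1 v.2)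
    ((affTop k N).induced Subtype.val)

/-- The dimension of a subset of a topological space (Krull dimension of the subspace). -/
def sdim {X : Type*} (t : TopologicalSpace X) (S : Set X) : WithBot ℕ∞ :=
  @topologicalKrullDim S (t.induced Subtype.val)

/-- `C` is an irreducible component of `S`, i.e. a maximal irreducible subset of `S`. -/
def IsIrredComponentOf {X : Type*} (t : TopologicalSpace X) (S C : Set X) : Prop :=
  C ⊆ S ∧ @IsIrreducible X t C ∧
    ∀ C' : Set X, C' ⊆ S → @IsIrreducible X t C' → C ⊆ C' → C' = C

/-- A homogeneous ideal: one generated by homogeneous elements. -/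
def IsHomogIdeal {k : Type*} [CommRing k] {N : ℕ} (I : Ideal (MvPolynomial (Fin N) k)) :
    Prop :=
  ∃ s : Set (MvPolynomial (Fin N) k),
    (∀ g ∈ s, ∃ d, MvPolynomial.IsHomogeneous g d) ∧ I = Ideal.span s

/-- The ideal of the singular locus `V(F, ∂F/∂x_0, …, ∂F/∂x_n)` of the hypersurface
`V(F)`. -/
def singIdeal {k : Type*} [CommRing k] {n : ℕ} (F : MvPolynomial (Fin (n + 1)) k) :
    Ideal (MvPolynomial (Fin (n + 1)) k) :=
  Ideal.span (insert F (Set.range fun i => MvPolynomial.pderiv i F))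

/-- The dimension (over `k`) of the degree-`l` graded piece of `S/I`. -/
def gradedPieceRank {k : Type*} [Field k] {N : ℕ} (I : Ideal (MvPolynomial (Fin N) k))
    (l : ℕ) : ℕ :=
  Module.finrank k
    ((MvPolynomial.homogeneousSubmodule (Fin N) k l).map
      (Ideal.Quotient.mkₐ k I).toLinearMap)

/-- The homogeneous ideal `I` (defining a closed subscheme of projective space) has
Hilbert polynomial `h`:  for all large `m`, `dim_k (S/I)_m = h(m)`. -/
def HasHilbertPoly {k : Type*} [Field k] {N : ℕ} (I : Ideal (MvPolynomial (Fin N) k))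
    (h : Polynomial ℚ) : Prop :=
  ∀ᶠ m in Filter.atTop, ((gradedPieceRank I m : ℚ)) = h.eval (m : ℚ)

/-- The closed subscheme defined by `I` has dimension `b` and degree `d`: its Hilbert
polynomial is `(d/b!) z^b + (lower order terms)`. -/
def HasDimDeg {k : Type*} [Field k] {N : ℕ} (I : Ideal (MvPolynomial (Fin N) k))
    (b d : ℕ) : Prop :=
  ∃ h : Polynomial ℚ, h.natDegree = b ∧
    h.leadingCoeff = (d : ℚ) / (Nat.factorial b : ℚ) ∧ HasHilbertPoly I h

/-- `I` defines an integral closed subscheme of projective space: it is a relevant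
homogeneous prime ideal. -/
def IsIntegralSubscheme {k : Type*} [Field k] {N : ℕ}
    (I : Ideal (MvPolynomial (Fin N) k)) : Prop :=
  IsHomogIdeal I ∧ I.IsPrime ∧ ∃ i, MvPolynomial.X i ∉ I

/-- The singular locus of `V(F)` has dimension at least `b`:  some relevant homogeneous
prime containing the ideal of the singular locus has quotient of Krull dimension at
least `b + 1` (projective dimension at least `b`). -/
def SingDimGE {k : Type*} [Field k] {n : ℕ} (b : ℕ)
    (F : MvPolynomial (Fin (n + 1)) k) : Prop :=
  ∃ P : Ideal (MvPolynomial (Fin (n + 1)) k),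
    IsHomogIdeal P ∧ P.IsPrime ∧ (∃ i, MvPolynomial.X i ∉ P) ∧
    singIdeal F ≤ P ∧
    ((b : WithBot ℕ∞) + 1) ≤ ringKrullDim (MvPolynomial (Fin (n + 1)) k ⧸ P)

/-- The moduli space `X` of degree-`l` hypersurfaces in `ℙⁿ` whose singular locus has
dimension at least `b`, as a subset of `ℙ(k[x_0,…,x_n]_l)`. -/
def Xset (k : Type*) [Field k] (n b l : ℕ) :
    Set (Projectivization k (MvPolynomial.homogeneousSubmodule (Fin (n + 1)) k l)) :=
  {x | ∃ (F : MvPolynomial.homogeneousSubmodule (Fin (n + 1)) k l) (hF : F ≠ 0),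
    x = Projectivization.mk k F hF ∧ SingDimGE b (F : MvPolynomial (Fin (n + 1)) k)}

/-- The locus `X¹` of degree-`l` hypersurfaces singular along some `b`-dimensional
linear subspace `L ⊆ ℙⁿ` (given by `n - b` independent linear forms). -/
def X1set (k : Type*) [Field k] (n b l : ℕ) :
    Set (Projectivization k (MvPolynomial.homogeneousSubmodule (Fin (n + 1)) k l)) :=
  {x | ∃ (F : MvPolynomial.homogeneousSubmodule (Fin (n + 1)) k l) (hF : F ≠ 0),
    x = Projectivization.mk k F hF ∧
    ∃ ℓ : Fin (n - b) → MvPolynomial (Fin (n + 1)) k,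
      (∀ i, MvPolynomial.IsHomogeneous (ℓ i) 1) ∧ LinearIndependent k ℓ ∧
      singIdeal (F : MvPolynomial (Fin (n + 1)) k) ≤ Ideal.span (Set.range ℓ)}

/-- The locus `T^d` of degree-`l` hypersurfaces whose singular locus contains a closed
subscheme whose Hilbert polynomial is the Hilbert polynomial of some integral
`b`-dimensional closed subscheme of `ℙⁿ` of degree `d`. -/
def Tdset (k : Type*) [Field k] (n b l d : ℕ) :
    Set (Projectivization k (MvPolynomial.homogeneousSubmodule (Fin (n + 1)) k l)) :=
  {x | ∃ (F : MvPolynomial.homogeneousSubmodule (Fin (n + 1)) k l) (hF : F ≠ 0),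
    x = Projectivization.mk k F hF ∧
    ∃ J : Ideal (MvPolynomial (Fin (n + 1)) k), IsHomogIdeal J ∧
      singIdeal (F : MvPolynomial (Fin (n + 1)) k) ≤ J ∧
      ∃ (P : Ideal (MvPolynomial (Fin (n + 1)) k)) (h : Polynomial ℚ),
        IsIntegralSubscheme P ∧ h.natDegree = b ∧
        h.leadingCoeff = (d : ℚ) / (Nat.factorial b : ℚ) ∧
        HasHilbertPoly P h ∧ HasHilbertPoly J h}

/-- `A_b(l,m) = Σ_{e=1}^{m} C(l−e+1+b, b)`. -/
def Abound (b l m : ℕ) : ℕ :=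
  ∑ e ∈ Finset.Icc 1 m, Nat.choose (l + 1 - e + b) b

/-- Homogenization of a polynomial in `x_0, …, x_{n-1}` to a homogeneous polynomial of
degree `m` in `x_0, …, x_n`, with respect to the last variable `x_n`. -/
def homogenizeTo {R : Type*} [CommRing R] {n : ℕ} (m : ℕ)
    (f : MvPolynomial (Fin n) R) : MvPolynomial (Fin (n + 1)) R :=
  ∑ d ∈ Finset.range (m + 1),
    (MvPolynomial.rename Fin.castSucc (MvPolynomial.homogeneousComponent d f)) *
      (MvPolynomial.X (Fin.last n)) ^ (m - d)

/-- The differential of `g` at the point `p`, as a linear functional. -/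
def dirDerivAt {k : Type*} [Field k] {N : ℕ} (p : Fin N → k)
    (g : MvPolynomial (Fin N) k) : (Fin N → k) →ₗ[k] k :=
  ∑ i, MvPolynomial.eval p (MvPolynomial.pderiv i g) • LinearMap.proj i

/-- The tangent space at `p` of the affine cone on the closed subscheme defined by the
homogeneous ideal `J` (the Zariski tangent space of the projective subscheme at the
point `[p]` has dimension one less). -/
def coneTangent {k : Type*} [Field k] {N : ℕ} (J : Ideal (MvPolynomial (Fin N) k))
    (p : Fin N → k) : Submodule k (Fin N → k) :=
  ⨅ g ∈ J, LinearMap.ker (dirDerivAt p g)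

end ModuliOfSingularHypersurfaces

open Module

namespace Stmt3


variable {k : Type*} [Field k]

lemma finrank_map_add_finrank_inf_ker {M M' : Type*} [AddCommGroup M] [Module k M]
    [AddCommGroup M'] [Module k M'] (p : Submodule k M) [FiniteDimensional k p]
    (f : M →ₗ[k] M') :
    finrank k (p.map f) + finrank k ↥(p ⊓ LinearMap.ker f) = finrank k p := by
  have h := LinearMap.finrank_range_add_finrank_ker (f.domRestrict p)
  rw [LinearMap.range_domRestrict, LinearMap.ker_domRestrict] at h
  rw [← h]
  congr 1
  have e := Submodule.equivMapOfInjective p.subtype (Submodule.injective_subtype p)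
    ((LinearMap.ker f).comap p.subtype)
  rw [Submodule.map_comap_subtype] at e
  exact e.finrank_eq.symm

lemma degree_eq_one_single {σ : Type*} (d : σ →₀ ℕ) (h : d.degree = 1) :
    ∃ i, d = Finsupp.single i 1 := by
  have hne : d.support.Nonempty := by
    rw [Finset.nonempty_iff_ne_empty]
    intro hc
    rw [Finsupp.degree_apply, hc, Finset.sum_empty] at h
    exact one_ne_zero h.symm
  have hcard : d.support.card ≤ 1 := by
    have h1 : d.support.card = ∑ _j ∈ d.support, 1 := by simp
    have h2 : ∑ _j ∈ d.support, 1 ≤ ∑ j ∈ d.support, d j :=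
      Finset.sum_le_sum fun j hj => Nat.one_le_iff_ne_zero.mpr (Finsupp.mem_support_iff.mp hj)
    rw [Finsupp.degree_apply] at h
    omega
  have hc1 : d.support.card = 1 := le_antisymm hcard (Finset.card_pos.mpr hne)
  obtain ⟨i, hsupp⟩ := Finset.card_eq_one.mp hc1
  have hdi : d i = 1 := by
    rw [Finsupp.degree_apply, hsupp, Finset.sum_singleton] at h
    exact h
  obtain ⟨-, hd⟩ := Finsupp.support_eq_singleton.mp hsupp
  exact ⟨i, by rw [hd, hdi]⟩

lemma monomial_eq_smul {N : ℕ} (d : Fin N →₀ ℕ) (c : k) :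
    monomial d c = c • monomial d (1 : k) := by
  rw [MvPolynomial.smul_monomial, smul_eq_mul, mul_one]

lemma isHomog_one_mem_span_X {N : ℕ} {p : MvPolynomial (Fin N) k} (hp : p.IsHomogeneous 1) :
    p ∈ Submodule.span k (Set.range (X : Fin N → MvPolynomial (Fin N) k)) := by
  nth_rewrite 1 [MvPolynomial.as_sum p]
  apply Submodule.sum_mem
  intro d hd
  have hdeg : d.degree = 1 := by
    by_contra hc
    exact (MvPolynomial.mem_support_iff.mp hd) (hp.coeff_eq_zero hc)
  obtain ⟨i, rfl⟩ := degree_eq_one_single d hdeg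
  rw [monomial_eq_smul]
  have hX : (monomial (Finsupp.single i 1) (1:k)) = X i := rfl
  rw [hX]
  exact Submodule.smul_mem _ _ (Submodule.subset_span ⟨i, rfl⟩)

/-- coordinates of a degree-one form -/
lemma exists_coords {N : ℕ} {p : MvPolynomial (Fin N) k} (hp : p.IsHomogeneous 1) :
    ∃ c : Fin N → k, ∑ i, c i • (X i : MvPolynomial (Fin N) k) = p :=
  (Submodule.mem_span_range_iff_exists_fun k).mp (isHomog_one_mem_span_X hp)



variable {k : Type*} [Field k] {N : ℕ}

lemma hc_one_mul (p g : MvPolynomial (Fin N) k) (hg : g.IsHomogeneous 1) :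
    homogeneousComponent 1 (p * g) = C (coeff 0 p) * g := by
  have hsum : p * g = ∑ i ∈ Finset.range (p.totalDegree + 1),
      (homogeneousComponent i p) * g := by
    rw [← Finset.sum_mul, sum_homogeneousComponent]
  rw [hsum, map_sum]
  have hterm : ∀ i, homogeneousComponent 1 ((homogeneousComponent i p) * g)
      = if 1 = i + 1 then (homogeneousComponent i p) * g else 0 := by
    intro i
    exact homogeneousComponent_of_mem
      ((mem_homogeneousSubmodule _ _).mpr ((homogeneousComponent_isHomogeneous i p).mul hg))
  rw [Finset.sum_congr rfl fun i _ => hterm i]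
  rw [Finset.sum_eq_single 0 (fun i _ hi => by rw [if_neg (by omega)])
    (fun h => absurd (Finset.mem_range.mpr (by omega)) h)]
  rw [if_pos rfl, homogeneousComponent_zero]

lemma mem_kspan_of_mem_ideal_span {s : Set (MvPolynomial (Fin N) k)}
    (hs : ∀ g ∈ s, MvPolynomial.IsHomogeneous g 1) {f : MvPolynomial (Fin N) k}
    (hf : f.IsHomogeneous 1) (hmem : f ∈ Ideal.span s) :
    f ∈ Submodule.span k s := by
  rw [Ideal.span] at hmem
  obtain ⟨c, hsupp, hsum⟩ := Submodule.mem_span_set.mp hmem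
  have h1 : homogeneousComponent 1 f = f := by
    rw [homogeneousComponent_of_mem ((mem_homogeneousSubmodule _ _).mpr hf), if_pos rfl]
  rw [← h1, ← hsum, Finsupp.sum, map_sum]
  apply Submodule.sum_mem
  intro g hg
  rw [smul_eq_mul, hc_one_mul _ _ (hs g (hsupp hg)), MvPolynomial.C_mul']
  exact Submodule.smul_mem _ _ (Submodule.subset_span (hsupp hg))

lemma ideal_span_eq_of_kspan_eq {ι ι' : Type*} (v : ι → MvPolynomial (Fin N) k)
    (w : ι' → MvPolynomial (Fin N) k)
    (h : Submodule.span k (Set.range v) = Submodule.span k (Set.range w)) :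
    Ideal.span (Set.range v) = Ideal.span (Set.range w) := by
  apply le_antisymm <;> rw [Ideal.span_le] <;> intro x hx
  · have h1 : x ∈ Submodule.span k (Set.range w) := h ▸ Submodule.subset_span hx
    have h2 : Submodule.span k (Set.range w) ≤
        (Ideal.span (Set.range w)).restrictScalars k :=
      Submodule.span_le.mpr fun y hy => Ideal.subset_span hy
    exact h2 h1
  · have h1 : x ∈ Submodule.span k (Set.range v) := h ▸ Submodule.subset_span hx
    have h2 : Submodule.span k (Set.range v) ≤
        (Ideal.span (Set.range v)).restrictScalars k :=
      Submodule.span_le.mpr fun y hy => Ideal.subset_span hy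
    exact h2 h1

lemma prod_sub_prod_mem {ι : Type*} (I : Ideal (MvPolynomial (Fin N) k)) (T : Finset ι)
    (gg : ι → MvPolynomial (Fin N) k) (c : ι → MvPolynomial (Fin N) k)
    (w : MvPolynomial (Fin N) k) (hg : ∀ j ∈ T, gg j ∈ I) :
    (∏ j ∈ T, (gg j + c j * w)) - (∏ j ∈ T, c j) * w ^ T.card ∈ I := by
  classical
  induction T using Finset.induction with
  | empty => simp
  | @insert a s ha ih =>
    have hr := ih (fun j hj => hg j (Finset.mem_insert_of_mem hj))
    set P := ∏ j ∈ s, (gg j + c j * w) with hP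
    set cP := ∏ j ∈ s, c j with hcP
    have hPexp : P = cP * w ^ s.card + (P - cP * w ^ s.card) := by ring
    rw [Finset.prod_insert ha, Finset.prod_insert ha, Finset.card_insert_of_notMem ha]
    have key : (gg a + c a * w) * P - c a * cP * w ^ (s.card + 1)
        = gg a * P + (c a * w) * (P - cP * w ^ s.card) := by ring
    rw [key]
    exact I.add_mem (I.mul_mem_right P (hg a (Finset.mem_insert_self a s)))
      (I.mul_mem_left (c a * w) hr)

lemma homog_fd (l : ℕ) : FiniteDimensional k ↥(homogeneousSubmodule (Fin N) k l) := by
  classical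
  have hle : homogeneousSubmodule (Fin N) k l ≤ Submodule.span k
      ((fun d => monomial d (1 : k)) ''
        ↑(Finset.finsuppAntidiag (Finset.univ : Finset (Fin N)) l)) := by
    intro p hp
    rw [mem_homogeneousSubmodule] at hp
    nth_rewrite 1 [MvPolynomial.as_sum p]
    apply Submodule.sum_mem
    intro d hd
    have hdeg : d.degree = l := by
      by_contra hc
      exact (MvPolynomial.mem_support_iff.mp hd) (hp.coeff_eq_zero hc)
    have hmem : d ∈ Finset.finsuppAntidiag (Finset.univ : Finset (Fin N)) l := by
      rw [Finset.mem_finsuppAntidiag]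
      refine ⟨?_, Finset.subset_univ _⟩
      rw [← hdeg, Finsupp.degree]
      exact (Finset.sum_subset (Finset.subset_univ _)
        (fun x _ hx => Finsupp.notMem_support_iff.mp hx)).symm
    have : monomial d (coeff d p) = (coeff d p) • monomial d (1:k) := by
      rw [MvPolynomial.smul_monomial, smul_eq_mul, mul_one]
    rw [this]
    exact Submodule.smul_mem _ _ (Submodule.subset_span ⟨d, hmem, rfl⟩)
  haveI := FiniteDimensional.span_of_finite k
    (Set.Finite.image (fun d => monomial d (1 : k))
      (Finset.finite_toSet (Finset.finsuppAntidiag (Finset.univ : Finset (Fin N)) l)))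
  exact Submodule.finiteDimensional_of_le hle

lemma card_sym_fin (b r : ℕ) : Fintype.card (Sym (Fin (b + 1)) r) = (r + b).choose b := by
  rw [Sym.card_sym_eq_choose, Fintype.card_fin]
  rw [show b + 1 + r - 1 = r + b by omega]
  rw [show r = (r + b) - b by omega]
  rw [show (r + b) - b + b = r + b by omega]
  exact Nat.choose_symm (by omega)

lemma abound_zero (b l : ℕ) : Abound b l 0 = 0 := by simp [Abound]

lemma abound_succ (b l e : ℕ) : Abound b l (e + 1) = Abound b l e + (l - e + b).choose b := by
  rw [Abound, Abound, Finset.sum_Icc_succ_top (by omega : 1 ≤ e + 1)]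
  congr 2
  omega



variable {k : Type*} [Field k]

/-- The linear map sending coordinates to a linear form. -/
noncomputable def piForm (k : Type*) [Field k] (N : ℕ) : (Fin N → k) →ₗ[k] MvPolynomial (Fin N) k where
  toFun c := ∑ i, c i • X i
  map_add' c d := by simp [add_smul, Finset.sum_add_distrib]
  map_smul' a c := by simp [smul_smul, Finset.smul_sum]

lemma piForm_homog {N : ℕ} (c : Fin N → k) : (piForm k N c).IsHomogeneous 1 := by
  apply MvPolynomial.IsHomogeneous.sum
  intro i _
  rw [← MvPolynomial.C_mul']
  exact (isHomogeneous_X k i).C_mul (c i)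

lemma exists_phi {N j t : ℕ} (hN : j + (t + 1) = N)
    (le : Fin j → MvPolynomial (Fin N) k) (hle : ∀ i, (le i).IsHomogeneous 1)
    (hli : LinearIndependent k le) (w : MvPolynomial (Fin N) k) (hw : w.IsHomogeneous 1)
    (hwE : w ∉ Submodule.span k (Set.range le)) :
    ∃ (Φ : MvPolynomial (Fin N) k →ₐ[k] MvPolynomial (Fin (t + 1)) k)
      (vv : Fin (t + 1) → MvPolynomial (Fin N) k),
      (∀ x ∈ Ideal.span (Set.range le), Φ x = 0) ∧
      (∀ q, Φ (vv q) = X q) ∧ vv 0 = w ∧ (∀ q, (vv q).IsHomogeneous 1) := by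
  classical
  -- coordinates
  choose r hr using fun i => exists_coords (hle i)
  obtain ⟨rww, hrww⟩ := exists_coords hw
  have hπr : ∀ i, piForm k N (r i) = le i := fun i => hr i
  have hπw : piForm k N rww = w := hrww
  -- independence of the coordinate rows
  have hcomp : ⇑(piForm k N) ∘ r = le := funext fun i => hπr i
  have hrli : LinearIndependent k r := by
    apply LinearIndependent.of_comp (piForm k N)
    rw [hcomp]
    exact hli
  have hspan : (piForm k N) '' (Set.range r) = Set.range le := by
    rw [← Set.range_comp, hcomp]
  have hwr : rww ∉ Submodule.span k (Set.range r) := by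
    intro hc
    apply hwE
    rw [← hπw]
    have := Submodule.mem_map_of_mem (f := piForm k N) hc
    rw [Submodule.map_span, hspan] at this
    exact this
  have hwnr : rww ∉ Set.range r := fun hc => hwr (Submodule.subset_span hc)
  -- the independent set
  set s : Set (Fin N → k) := insert rww (Set.range r) with hs_def
  have hs : LinearIndepOn k id s :=
    ((linearIndepOn_id_range_iff hrli.injective).mpr hrli).id_insert hwr
  -- extend to a basis
  set B := Module.Basis.extend hs with hB
  haveI : FiniteDimensional k (Fin N → k) := inferInstance
  haveI : Fintype ↥(hs.extend (Set.subset_univ s)) := FiniteDimensional.fintypeBasisIndex B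
  have hsub_s : s ⊆ hs.extend (Set.subset_univ s) := hs.subset_extend _
  have hrt : ∀ i, r i ∈ hs.extend (Set.subset_univ s) :=
    fun i => hsub_s (Set.mem_insert_of_mem _ ⟨i, rfl⟩)
  have hwt : rww ∈ hs.extend (Set.subset_univ s) := hsub_s (Set.mem_insert _ _)
  -- cardinalities
  have hcardt : Fintype.card ↥(hs.extend (Set.subset_univ s)) = N := by
    rw [← Module.finrank_eq_card_basis B, Module.finrank_pi, Fintype.card_fin]
  have hcardr : Fintype.card {x : ↥(hs.extend (Set.subset_univ s)) //
      (x : Fin N → k) ∈ Set.range r} = j := by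
    have e : {x : ↥(hs.extend (Set.subset_univ s)) // (x : Fin N → k) ∈ Set.range r} ≃
        ↥(Set.range r) :=
      { toFun := fun x => ⟨x.1.1, x.2⟩
        invFun := fun y => ⟨⟨y.1, hsub_s (Set.mem_insert_of_mem _ y.2)⟩, y.2⟩
        left_inv := fun x => rfl
        right_inv := fun y => rfl }
    rw [Fintype.card_congr e, Set.card_range_of_injective hrli.injective, Fintype.card_fin]
  have hcardD : Fintype.card {x : ↥(hs.extend (Set.subset_univ s)) //
      (x : Fin N → k) ∉ Set.range r} = t + 1 := by
    rw [Fintype.card_subtype_compl, hcardt, hcardr]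
    omega
  -- the equivalence
  obtain ⟨ε₀⟩ := Fintype.card_eq.mp (hcardD.trans (Fintype.card_fin (t+1)).symm)
  set x0 : {x : ↥(hs.extend (Set.subset_univ s)) // (x : Fin N → k) ∉ Set.range r} :=
    ⟨⟨rww, hwt⟩, hwnr⟩ with hx0
  set ε := ε₀.trans (Equiv.swap (ε₀ x0) 0) with hε
  have hεx0 : ε x0 = 0 := by
    simp [hε, Equiv.swap_apply_left]
  -- the linear map
  set val : ↥(hs.extend (Set.subset_univ s)) → MvPolynomial (Fin (t + 1)) k :=
    fun x => if h : (x : Fin N → k) ∈ Set.range r then 0 else X (ε ⟨x, h⟩) with hval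
  set L := (B.constr k : _ ≃ₗ[k] _) val with hL
  have hLB : ∀ x : ↥(hs.extend (Set.subset_univ s)), L (x : Fin N → k) = val x := by
    intro x
    have : (x : Fin N → k) = B x := (Module.Basis.extend_apply_self hs x).symm
    rw [this]
    exact B.constr_basis k val x
  -- the algebra map
  set Φ : MvPolynomial (Fin N) k →ₐ[k] MvPolynomial (Fin (t + 1)) k :=
    aeval (fun i => L (Pi.single i 1)) with hΦ
  have hΦπ : ∀ c : Fin N → k, Φ (piForm k N c) = L c := by
    intro c
    have h1 : piForm k N c = ∑ i, c i • X i := rfl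
    rw [h1, map_sum]
    have h2 : ∀ i, Φ (c i • X i) = c i • L (Pi.single i 1) := by
      intro i
      rw [map_smul, hΦ, aeval_X]
    rw [Finset.sum_congr rfl fun i _ => h2 i]
    have h3 : ∀ i : Fin N, c i • L (Pi.single i (1:k)) = L (Pi.single i (c i)) := by
      intro i
      rw [← map_smul]
      congr 1
      rw [← Pi.single_smul, smul_eq_mul, mul_one]
    rw [Finset.sum_congr rfl fun i _ => h3 i, ← map_sum]
    congr 1
    exact Finset.univ_sum_single c
  have hΦle : ∀ i, Φ (le i) = 0 := by
    intro i
    rw [← hπr i, hΦπ, hLB ⟨r i, hrt i⟩]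
    exact dif_pos ⟨i, rfl⟩
  have hΦideal : ∀ x ∈ Ideal.span (Set.range le), Φ x = 0 := by
    intro x hx
    have : Ideal.span (Set.range le) ≤ RingHom.ker Φ.toRingHom := by
      rw [Ideal.span_le]
      rintro y ⟨i, rfl⟩
      exact hΦle i
    exact this hx
  -- the forms vv
  set vv : Fin (t + 1) → MvPolynomial (Fin N) k :=
    fun q => piForm k N ((ε.symm q).1.1 : Fin N → k) with hvv
  refine ⟨Φ, vv, hΦideal, ?_, ?_, fun q => piForm_homog _⟩
  · intro q
    rw [hvv]
    rw [hΦπ, hLB (ε.symm q).1]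
    simp only [hval]
    rw [dif_neg (ε.symm q).2]
    congr 1
    have : (⟨(ε.symm q).1, (ε.symm q).2⟩ :
        {x : ↥(hs.extend (Set.subset_univ s)) // (x : Fin N → k) ∉ Set.range r}) = ε.symm q :=
      rfl
    rw [this, Equiv.apply_symm_apply]
  · have h0 : ε.symm 0 = x0 := by
      rw [← hεx0, Equiv.symm_apply_apply]
    rw [hvv]
    show piForm k N ((ε.symm 0).1.1) = w
    rw [h0]
    exact hπw


end Stmt3




set_option maxHeartbeats 1000000 in
/-- Let `k` be algebraically closed, `n ≥ 3`, `1 ≤ b ≤ n−1`, and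
`l, m` positive with `m ≤ l+1`.  Let `L_1, …, L_m` be pairwise distinct `b`-dimensional
linear subspaces of `ℙⁿ_k` (each cut out by `n−b` linearly independent linear forms),
all containing a common `(b−1)`-dimensional linear subspace, with homogeneous ideals
`I_1, …, I_m`.  Then `dim_k (S/(I_1 ∩ ⋯ ∩ I_m))_l ≥ A_b(l,m)`, i.e. the degree-`l`
forms vanishing on `L_1 ∪ ⋯ ∪ L_m` have codimension at least `A_b(l,m)`. -/
theorem statement_3 (k : Type*) [Field k] [IsAlgClosed k] (n b l m : ℕ)
    (hn : 3 ≤ n) (hb1 : 1 ≤ b) (hb2 : b ≤ n - 1) (hl : 0 < l) (hm : 0 < m)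
    (hml : m ≤ l + 1)
    (lin : Fin m → (Fin (n - b) → MvPolynomial (Fin (n + 1)) k))
    (hlinhom : ∀ j i, MvPolynomial.IsHomogeneous (lin j i) 1)
    (hlinind : ∀ j, LinearIndependent k (lin j))
    (I : Fin m → Ideal (MvPolynomial (Fin (n + 1)) k))
    (hI : ∀ j, I j = Ideal.span (Set.range (lin j)))
    (hdist : Function.Injective I)
    (common : Fin (n - b + 1) → MvPolynomial (Fin (n + 1)) k)
    (hchom : ∀ i, MvPolynomial.IsHomogeneous (common i) 1)
    (hcind : LinearIndependent k common)
    (hcontain : ∀ j, I j ≤ Ideal.span (Set.range common)) :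
    Abound b l m ≤ gradedPieceRank (⨅ j, I j) l := by
  classical
  set V : Submodule k (MvPolynomial (Fin (n + 1)) k) :=
    homogeneousSubmodule (Fin (n + 1)) k l with hV
  haveI : FiniteDimensional k V := Stmt3.homog_fd l
  set E : Fin m → Submodule k (MvPolynomial (Fin (n + 1)) k) :=
    fun j => Submodule.span k (Set.range (lin j)) with hE
  set Wc : Submodule k (MvPolynomial (Fin (n + 1)) k) :=
    Submodule.span k (Set.range common) with hWc
  have hEhom : ∀ j, E j ≤ homogeneousSubmodule (Fin (n + 1)) k 1 :=
    fun j => Submodule.span_le.mpr (by rintro x ⟨i, rfl⟩; exact hlinhom j i)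
  have hWchom : Wc ≤ homogeneousSubmodule (Fin (n + 1)) k 1 :=
    Submodule.span_le.mpr (by rintro x ⟨i, rfl⟩; exact hchom i)
  have hEI : ∀ j, E j ≤ (I j).restrictScalars k :=
    fun j => Submodule.span_le.mpr (fun x hx => by rw [hI j]; exact Ideal.subset_span hx)
  have hEWc : ∀ j, E j ≤ Wc := by
    intro j
    rw [hE]
    apply Submodule.span_le.mpr
    rintro x ⟨i, rfl⟩
    exact Stmt3.mem_kspan_of_mem_ideal_span (by rintro g ⟨i', rfl⟩; exact hchom i')
      (hlinhom j i) (hcontain j (hI j ▸ Ideal.subset_span ⟨i, rfl⟩))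
  have hErank : ∀ j, finrank k (E j) = n - b := by
    intro j
    rw [hE, finrank_span_eq_card (hlinind j), Fintype.card_fin]
  have hWcrank : finrank k Wc = n - b + 1 := by
    rw [hWc, finrank_span_eq_card hcind, Fintype.card_fin]
  haveI hWcfd : FiniteDimensional k Wc :=
    FiniteDimensional.span_of_finite k (Set.finite_range common)
  haveI hEfd : ∀ j, FiniteDimensional k (E j) :=
    fun j => FiniteDimensional.span_of_finite k (Set.finite_range (lin j))
  have hEnotle : ∀ j e : Fin m, j ≠ e → ¬(E j ≤ E e) := by
    intro j e hne hle'
    have heq : E j = E e :=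
      Submodule.eq_of_le_of_finrank_eq hle' (by rw [hErank, hErank])
    apply hne
    apply hdist
    rw [hI j, hI e]
    exact Stmt3.ideal_span_eq_of_kspan_eq _ _ heq
  -- the decreasing chain of intersections
  set K : ℕ → Submodule k (MvPolynomial (Fin (n + 1)) k) := fun e =>
    V ⊓ ⨅ j ∈ Finset.univ.filter (fun j : Fin m => (j : ℕ) < e),
      (I j).restrictScalars k with hK
  haveI hKfd : ∀ e, FiniteDimensional k (K e) :=
    fun e => Submodule.finiteDimensional_of_le inf_le_left
  -- main step
  have hstep : ∀ e : ℕ, e < m → finrank k (K (e + 1)) + (l - e + b).choose b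
      ≤ finrank k (K e) := by
    intro e hem
    set ee : Fin m := ⟨e, hem⟩ with hee
    set A := K e with hA
    set Bm := (I ee).restrictScalars k ⊓ V with hBm
    haveI : FiniteDimensional k A := hKfd e
    haveI : FiniteDimensional k Bm := Submodule.finiteDimensional_of_le inf_le_right
    haveI : FiniteDimensional k ↥(A ⊔ Bm) :=
      Submodule.finiteDimensional_of_le (sup_le inf_le_left inf_le_right)
    have hKsucc : K (e + 1) = A ⊓ Bm := by
      ext x
      simp only [hK, hA, hBm, Submodule.mem_inf, Submodule.mem_iInf, Finset.mem_filter,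
        Finset.mem_univ, true_and, Submodule.restrictScalars_mem]
      constructor
      · rintro ⟨hxV, hxI⟩
        exact ⟨⟨hxV, fun j hj => hxI j (by omega)⟩, hxI ee (by simp [hee]), hxV⟩
      · rintro ⟨⟨hxV, hxI⟩, hxe, -⟩
        refine ⟨hxV, fun j hj => ?_⟩
        rcases Nat.lt_succ_iff_lt_or_eq.mp hj with h | h
        · exact hxI j h
        · have : j = ee := Fin.ext h
          rw [this]; exact hxe
    -- pick w
    have hlt : E ee < Wc := by
      apply lt_of_le_of_ne (hEWc ee)
      intro hc
      have h1 := hErank ee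
      rw [hc, hWcrank] at h1
      omega
    obtain ⟨w, hwWc, hwE⟩ := SetLike.exists_of_lt hlt
    have hwhom : w.IsHomogeneous 1 := hWchom hwWc
    have hwne0 : w ≠ 0 := fun hc => hwE (hc ▸ (E ee).zero_mem)
    have hsup : E ee ⊔ (k ∙ w) = Wc := by
      apply Submodule.eq_of_le_of_finrank_le
        (sup_le (hEWc ee) ((Submodule.span_singleton_le_iff_mem w Wc).mpr hwWc))
      rw [hWcrank]
      have hdisj : E ee ⊓ (k ∙ w) = ⊥ := by
        rw [Submodule.eq_bot_iff]
        rintro x ⟨hx1, hx2⟩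
        obtain ⟨c, rfl⟩ := Submodule.mem_span_singleton.mp hx2
        by_cases hc : c = 0
        · rw [hc, zero_smul]
        · exact absurd (by
            have : w = c⁻¹ • (c • w) := by rw [smul_smul, inv_mul_cancel₀ hc, one_smul]
            rw [this]
            exact Submodule.smul_mem _ _ hx1) hwE
      have hh := Submodule.finrank_sup_add_finrank_inf_eq (E ee) (k ∙ w)
      rw [hdisj, finrank_bot, finrank_span_singleton hwne0, hErank] at hh
      omega
    -- decompositions
    have hpick : ∀ j : Fin m, j ≠ ee →
        ∃ g c, g ∈ E ee ∧ c ≠ (0 : k) ∧ g + c • w ∈ E j := by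
      intro j hj
      obtain ⟨f, hfj, hfe⟩ := SetLike.not_le_iff_exists.mp (hEnotle j ee hj)
      have hfWc : f ∈ E ee ⊔ (k ∙ w) := hsup ▸ hEWc j hfj
      obtain ⟨g, hg, y, hy, hgy⟩ := Submodule.mem_sup.mp hfWc
      obtain ⟨c, rfl⟩ := Submodule.mem_span_singleton.mp hy
      refine ⟨g, c, hg, ?_, by rw [hgy]; exact hfj⟩
      intro hc
      apply hfe
      rw [← hgy, hc, zero_smul, add_zero]
      exact hg
    choose gg cc hgmem hcne hsummem using hpick
    set gg' : Fin m → MvPolynomial (Fin (n + 1)) k :=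
      fun j => if h : j = ee then 0 else gg j h with hgg'
    set cc' : Fin m → k := fun j => if h : j = ee then 1 else cc j h with hcc'
    have hgg'mem : ∀ j, gg' j ∈ E ee := by
      intro j
      simp only [hgg']
      by_cases h : j = ee
      · rw [dif_pos h]; exact (E ee).zero_mem
      · rw [dif_neg h]; exact hgmem j h
    set T := Finset.univ.filter (fun j : Fin m => (j : ℕ) < e) with hT
    have hTne : ∀ j ∈ T, j ≠ ee := by
      intro j hj
      rw [hT, Finset.mem_filter] at hj
      intro hc
      rw [hc] at hj
      simp [hee] at hj
    have hTcard : T.card = e := by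
      have e1 : {j : Fin m // (j : ℕ) < e} ≃ Fin e :=
        { toFun := fun x => ⟨x.1, x.2⟩
          invFun := fun i => ⟨⟨i.1, by omega⟩, i.2⟩
          left_inv := fun x => Subtype.ext (Fin.ext rfl)
          right_inv := fun i => Fin.ext rfl }
      have h2 := Fintype.card_subtype (p := fun j : Fin m => (j : ℕ) < e)
      rw [Fintype.card_congr e1, Fintype.card_fin] at h2
      exact h2.symm
    set P := ∏ j ∈ T, (gg' j + cc' j • w) with hP
    have hfactor_homog : ∀ j, (gg' j + cc' j • w) ∈ homogeneousSubmodule (Fin (n + 1)) k 1 := by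
      intro j
      exact Submodule.add_mem _ (hEhom ee (hgg'mem j))
        (Submodule.smul_mem _ _ hwhom)
    have hPhom : P.IsHomogeneous e := by
      have := MvPolynomial.IsHomogeneous.prod T (fun j => gg' j + cc' j • w)
        (fun _ => 1) (fun j _ => hfactor_homog j)
      rwa [Finset.sum_const, smul_eq_mul, mul_one, hTcard] at this
    have hPI : ∀ j ∈ T, P ∈ I j := by
      intro j hj
      have hjne := hTne j hj
      have hfac : gg' j + cc' j • w ∈ I j := by
        apply hEI j
        simp only [hgg', hcc', dif_neg hjne]
        exact hsummem j hjne
      rw [hP, ← Finset.mul_prod_erase T _ hj]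
      exact Ideal.mul_mem_right _ _ hfac
    have hPexp : P - (∏ j ∈ T, cc' j) • w ^ e ∈ I ee := by
      have hh := Stmt3.prod_sub_prod_mem ((I ee)) T (fun j => gg' j)
        (fun j => C (cc' j)) w (fun j hj => hEI ee (hgg'mem j))
      rw [← map_prod, hTcard] at hh
      simpa only [MvPolynomial.C_mul'] using hh
    have hcprod : (∏ j ∈ T, cc' j) ≠ 0 := by
      apply Finset.prod_ne_zero_iff.mpr
      intro j hj
      simp only [hcc', dif_neg (hTne j hj)]
      exact hcne j (hTne j hj)
    -- the algebra map
    obtain ⟨Φ, vv, hΦideal, hΦvv, hvv0, hvvhom⟩ :=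
      Stmt3.exists_phi (k := k) (N := n + 1) (j := n - b) (t := b)
        (by omega) (lin ee) (hlinhom ee) (hlinind ee) w hwhom hwE
    have hΦIee : ∀ x ∈ I ee, Φ x = 0 := by
      intro x hx
      exact hΦideal x (by rw [← hI ee]; exact hx)
    have hΦw : Φ w = X 0 := by rw [← hvv0]; exact hΦvv 0
    -- the monomial family
    have hel : e ≤ l := by omega
    set dexp : Sym (Fin (b + 1)) (l - e) → (Fin (b + 1) →₀ ℕ) :=
      fun s => Multiset.toFinsupp ↑s with hdexp
    have hdsum : ∀ s, ∑ q, dexp s q = l - e := by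
      intro s
      simp only [hdexp, Multiset.toFinsupp_apply]
      rw [Multiset.sum_count_eq_card (fun a _ => Finset.mem_univ a)]
      exact s.2
    have hdinj : Function.Injective dexp := by
      intro s1 s2 h
      apply Sym.coe_injective
      have := Multiset.toFinsupp.injective h
      exact this
    set MM : Sym (Fin (b + 1)) (l - e) → MvPolynomial (Fin (n + 1)) k :=
      fun s => ∏ q, (vv q) ^ (dexp s q) with hMM
    have hMMhom : ∀ s, (MM s).IsHomogeneous (l - e) := by
      intro s
      have hh := MvPolynomial.IsHomogeneous.prod Finset.univ (fun q => vv q ^ dexp s q)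
        (fun q => dexp s q) (fun q _ => by
          have := (hvvhom q).pow (dexp s q)
          rwa [one_mul] at this)
      rwa [hdsum s] at hh
    have hΦMM : ∀ s, Φ (MM s) = monomial (dexp s) 1 := by
      intro s
      rw [hMM, map_prod]
      have h1 : ∀ q, Φ (vv q ^ dexp s q) = X q ^ dexp s q := by
        intro q; rw [map_pow, hΦvv]
      rw [Finset.prod_congr rfl fun q _ => h1 q]
      rw [← MvPolynomial.prod_X_pow_eq_monomial]
      exact (Finset.prod_subset (Finset.subset_univ _)
        (fun q _ hq => by rw [Finsupp.notMem_support_iff.mp hq, pow_zero])).symm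
    have hGmem : ∀ s, P * MM s ∈ A := by
      intro s
      have hmem : P * MM s ∈ V ⊓ ⨅ j ∈ Finset.univ.filter (fun j : Fin m => (j : ℕ) < e),
          (I j).restrictScalars k := by
        rw [Submodule.mem_inf]
        constructor
        · rw [hV, mem_homogeneousSubmodule]
          have := hPhom.mul (hMMhom s)
          rwa [show e + (l - e) = l by omega] at this
        · rw [Submodule.mem_iInf]
          intro j
          rw [Submodule.mem_iInf]
          intro hj
          rw [Submodule.restrictScalars_mem]
          exact Ideal.mul_mem_right _ _ (hPI j hj)
      exact hmem
    have hΦP : Φ P = (∏ j ∈ T, cc' j) • (X 0) ^ e := by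
      have h0 : Φ (P - (∏ j ∈ T, cc' j) • w ^ e) = 0 := hΦIee _ hPexp
      have h1 : Φ P = Φ ((∏ j ∈ T, cc' j) • w ^ e) := by
        rw [← sub_eq_zero, ← map_sub]; exact h0
      rw [h1, map_smul, map_pow, hΦw]
    have hfam : ∀ s, Φ (P * MM s) =
        (∏ j ∈ T, cc' j) • monomial (Finsupp.single 0 e + dexp s) 1 := by
      intro s
      rw [map_mul, hΦMM, hΦP, smul_mul_assoc, MvPolynomial.X_pow_eq_monomial,
        MvPolynomial.monomial_mul, one_mul]
    have hinj2 : Function.Injective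
        (fun s : Sym (Fin (b + 1)) (l - e) => Finsupp.single (0 : Fin (b+1)) e + dexp s) := by
      intro s1 s2 h
      exact hdinj (add_left_cancel h)
    have hli_fam : LinearIndependent k
        (fun s : Sym (Fin (b + 1)) (l - e) => Φ (P * MM s)) := by
      have hbase := ((MvPolynomial.basisMonomials (Fin (b + 1)) k).linearIndependent.comp
        _ hinj2)
      have hsmul := hbase.units_smul (fun _ => Units.mk0 _ hcprod)
      convert hsmul using 1
      funext s
      rw [hfam s]
      simp only [Pi.smul_apply', Function.comp_apply, MvPolynomial.coe_basisMonomials]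
      rfl
      all_goals rfl
    -- rank bounds
    haveI : FiniteDimensional k ↥((A ⊔ Bm).map Φ.toLinearMap) := inferInstance
    have h1 : (l - e + b).choose b ≤ finrank k ((A ⊔ Bm).map Φ.toLinearMap) := by
      have hspanle : Submodule.span k (Set.range fun s => Φ (P * MM s)) ≤
          (A ⊔ Bm).map Φ.toLinearMap := by
        rw [Submodule.span_le]
        rintro x ⟨s, rfl⟩
        exact ⟨P * MM s, Submodule.mem_sup_left (hGmem s), rfl⟩
      have hcardeq : finrank k ↥(Submodule.span k
          (Set.range fun s => Φ (P * MM s))) = (l - e + b).choose b := by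
        rw [finrank_span_eq_card hli_fam, Stmt3.card_sym_fin]
      rw [← hcardeq]
      exact Submodule.finrank_mono hspanle
    have h2 := Stmt3.finrank_map_add_finrank_inf_ker (A ⊔ Bm) Φ.toLinearMap
    have h3 : Bm ≤ (A ⊔ Bm) ⊓ LinearMap.ker Φ.toLinearMap := by
      apply le_inf le_sup_right
      rintro x ⟨hxI, hxV⟩
      rw [LinearMap.mem_ker, AlgHom.toLinearMap_apply]
      exact hΦIee x hxI
    haveI : FiniteDimensional k ↥((A ⊔ Bm) ⊓ LinearMap.ker Φ.toLinearMap) :=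
      Submodule.finiteDimensional_of_le (le_trans inf_le_left (sup_le inf_le_left inf_le_right))
    have h4 : finrank k Bm ≤ finrank k ↥((A ⊔ Bm) ⊓ LinearMap.ker Φ.toLinearMap) :=
      Submodule.finrank_mono h3
    have h5 := Submodule.finrank_sup_add_finrank_inf_eq A Bm
    rw [hKsucc]
    omega
  -- induction
  have hind : ∀ e : ℕ, e ≤ m → finrank k (K e) + Abound b l e ≤ finrank k V := by
    intro e
    induction e with
    | zero =>
      intro _
      rw [Stmt3.abound_zero]
      have hfilter0 : (Finset.univ.filter (fun j : Fin m => (j : ℕ) < 0)) = ∅ := by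
        apply Finset.filter_false_of_mem
        intro j _
        omega
      have hK0 : K 0 = V := by
        simp only [hK, hfilter0]
        simp
      rw [hK0]
      omega
    | succ e ih =>
      intro he
      have h1 := hstep e (by omega)
      have h2 := ih (by omega)
      rw [Stmt3.abound_succ]
      omega
  have hfinal := hind m le_rfl
  -- conclusion
  have hKm : K m = V ⊓ (⨅ j, I j).restrictScalars k := by
    have hfilter : (Finset.univ.filter (fun j : Fin m => (j : ℕ) < m)) = Finset.univ := by
      apply Finset.filter_true_of_mem
      intro j _
      exact j.2
    simp only [hK, hfilter]
    congr 1
    ext x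
    simp [Submodule.mem_iInf]
  have hker : LinearMap.ker (Ideal.Quotient.mkₐ k (⨅ j, I j)).toLinearMap =
      (⨅ j, I j).restrictScalars k := by
    ext x
    rw [LinearMap.mem_ker, AlgHom.toLinearMap_apply, Ideal.Quotient.mkₐ_eq_mk,
      Submodule.restrictScalars_mem]
    exact Ideal.Quotient.eq_zero_iff_mem
  have hrn := Stmt3.finrank_map_add_finrank_inf_ker V (Ideal.Quotient.mkₐ k (⨅ j, I j)).toLinearMap
  rw [hker] at hrn
  rw [hKm] at hfinal
  show Abound b l m ≤ finrank k
    ((V.map (Ideal.Quotient.mkₐ k (⨅ j, I j)).toLinearMap))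
  omega
end

section
/- Fix an integer n ≥ 3, a prime p, a power q of p, and a positive integer l, and set τ = ⌊(l−1)/p⌋. Let Z ⊂ P^n over the algebraic closure of F_p be an integral closed subscheme not contained in the hyperplane V(x_n), and let F_0 ∈ F_q[x_0,…,x_{n−1}]_{≤ l−1} be a fixed polynomial. Then the number of G ∈ F_q[x_0,…,x_{n−1}]_{≤ τ} such that Z ⊆ V((F_0 + G^p)^∼) (homogenization to degree l−1) is at most the number of G ∈ F_q[x_0,…,x_{n−1}]_{≤ τ} such that Z ⊆ V(G^∼) (homogenization to degree τ). -/
open MvPolynomial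

section AuxHomog

open MvPolynomial

lemma homogenizeTo_sub {R : Type*} [CommRing R] {n : ℕ} (m : ℕ)
    (f g : MvPolynomial (Fin n) R) :
    homogenizeTo m (f - g) = homogenizeTo m f - homogenizeTo m g := by
  simp [homogenizeTo, map_sub, sub_mul, Finset.sum_sub_distrib]

lemma homogenizeTo_add {R : Type*} [CommRing R] {n : ℕ} (m : ℕ)
    (f g : MvPolynomial (Fin n) R) :
    homogenizeTo m (f + g) = homogenizeTo m f + homogenizeTo m g := by
  simp [homogenizeTo, map_add, add_mul, Finset.sum_add_distrib]

lemma homogenizeTo_sum {R : Type*} [CommRing R] {n : ℕ} (m : ℕ)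
    {ι : Type*} (s : Finset ι) (f : ι → MvPolynomial (Fin n) R) :
    homogenizeTo m (∑ i ∈ s, f i) = ∑ i ∈ s, homogenizeTo m (f i) := by
  classical
  induction s using Finset.induction with
  | empty => simp [homogenizeTo]
  | insert _ _ h ih =>
      rw [Finset.sum_insert h, homogenizeTo_add, ih, Finset.sum_insert h]

lemma homogenizeTo_homog {R : Type*} [CommRing R] {n : ℕ}
    {h : MvPolynomial (Fin n) R} {e m : ℕ} (hh : h.IsHomogeneous e) (hem : e ≤ m) :
    homogenizeTo m h =
      MvPolynomial.rename Fin.castSucc h * MvPolynomial.X (Fin.last n) ^ (m - e) := by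
  have hmem : h ∈ homogeneousSubmodule (Fin n) R e :=
    (mem_homogeneousSubmodule _ _).mpr hh
  rw [homogenizeTo, Finset.sum_eq_single e]
  · rw [homogeneousComponent_of_mem hmem, if_pos rfl]
  · intro d _ hne
    rw [homogeneousComponent_of_mem hmem, if_neg hne, map_zero, zero_mul]
  · intro he
    exact absurd (Finset.mem_range.mpr (Nat.lt_succ_of_le hem)) he

lemma homogenizeTo_pow_char {R : Type*} [CommRing R] (p : ℕ) [Fact p.Prime]
    [CharP R p] {n : ℕ} {H : MvPolynomial (Fin n) R} {τ : ℕ}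
    (hH : H.totalDegree ≤ τ) (r : ℕ) :
    homogenizeTo (p * τ + r) (H ^ p) =
      (homogenizeTo τ H) ^ p * MvPolynomial.X (Fin.last n) ^ r := by
  have hsum : (∑ d ∈ Finset.range (τ + 1), homogeneousComponent d H) = H := by
    conv_rhs => rw [← sum_homogeneousComponent H]
    symm
    apply Finset.sum_subset
    · exact Finset.range_subset_range.mpr (by omega)
    · intro d _ hd
      exact homogeneousComponent_eq_zero d H
        (by simp only [Finset.mem_range, not_lt] at hd; omega)
  have hL : homogenizeTo (p * τ + r) (H ^ p) =
      ∑ d ∈ Finset.range (τ + 1),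
        MvPolynomial.rename Fin.castSucc ((homogeneousComponent d H) ^ p) *
          MvPolynomial.X (Fin.last n) ^ (p * τ + r - d * p) := by
    conv_lhs => rw [← hsum, sum_pow_char, homogenizeTo_sum]
    refine Finset.sum_congr rfl ?_
    intro d hd
    have hd' : d ≤ τ := by simpa [Nat.lt_succ_iff] using hd
    exact homogenizeTo_homog ((homogeneousComponent_isHomogeneous d H).pow p)
      (by nlinarith)
  rw [hL, homogenizeTo, sum_pow_char, Finset.sum_mul]
  refine Finset.sum_congr rfl ?_
  intro d hd
  have hd' : d ≤ τ := by simpa [Nat.lt_succ_iff] using hd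
  have hx : (MvPolynomial.X (σ := Fin (n+1)) (R := R) (Fin.last n) ^ (τ - d)) ^ p =
      MvPolynomial.X (Fin.last n) ^ (τ * p - d * p) := by
    rw [← pow_mul, Nat.sub_mul]
  rw [mul_pow, hx, ← map_pow (MvPolynomial.rename Fin.castSucc), mul_assoc, ← pow_add]
  congr 2
  have h2 : d * p ≤ τ * p := Nat.mul_le_mul_right _ hd'
  rw [mul_comm p τ]
  exact Nat.sub_add_comm h2

end AuxHomog

/-- Fix `n ≥ 3`, a prime `p`, a finite field `F_q` of characteristic
`p`, a positive integer `l`, and set `τ = ⌊(l−1)/p⌋`.  Let `Z ⊆ ℙⁿ` over the algebraic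
closure of `F_p` be an integral closed subscheme not contained in the hyperplane
`V(x_n)`, and let `F₀ ∈ F_q[x_0,…,x_{n−1}]_{≤ l−1}` be fixed.  Then the number of
`G ∈ F_q[x_0,…,x_{n−1}]_{≤ τ}` with `Z ⊆ V((F₀ + G^p)^∼)` (homogenization to degree
`l − 1`) is at most the number of `G ∈ F_q[x_0,…,x_{n−1}]_{≤ τ}` with `Z ⊆ V(G^∼)`
(homogenization to degree `τ`). -/
theorem statement_8 (p : ℕ) [Fact p.Prime] (Fq : Type*) [Field Fq] [Fintype Fq]
    [Algebra Fq (AlgebraicClosure (ZMod p))] (n l τ : ℕ)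
    (hn : 3 ≤ n) (hl : 0 < l) (hτ : τ = (l - 1) / p)
    (I : Ideal (MvPolynomial (Fin (n + 1)) (AlgebraicClosure (ZMod p))))
    (hint : IsIntegralSubscheme I)
    (hnot : MvPolynomial.X (Fin.last n) ∉ I)
    (F₀ : MvPolynomial (Fin n) Fq) (hF₀ : F₀.totalDegree ≤ l - 1) :
    Nat.card {G : MvPolynomial (Fin n) Fq // G.totalDegree ≤ τ ∧
        MvPolynomial.map (algebraMap Fq (AlgebraicClosure (ZMod p)))
          (homogenizeTo (l - 1) (F₀ + G ^ p)) ∈ I} ≤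
    Nat.card {G : MvPolynomial (Fin n) Fq // G.totalDegree ≤ τ ∧
        MvPolynomial.map (algebraMap Fq (AlgebraicClosure (ZMod p)))
          (homogenizeTo τ G) ∈ I} := by

  classical
  obtain ⟨-, hIprime, -⟩ := hint
  set k := AlgebraicClosure (ZMod p)
  set φ := algebraMap Fq k with hφ
  haveI : CharP Fq p := RingHom.charP φ (algebraMap Fq k).injective p
  haveI : CharP (MvPolynomial (Fin n) Fq) p :=
    charP_of_injective_ringHom (MvPolynomial.C_injective (Fin n) Fq) p
  haveI : Finite ↥(MvPolynomial.restrictTotalDegree (Fin n) Fq τ) :=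
    Module.finite_of_finite Fq
  haveI : Finite {G : MvPolynomial (Fin n) Fq // G.totalDegree ≤ τ ∧
      MvPolynomial.map (algebraMap Fq (AlgebraicClosure (ZMod p)))
        (homogenizeTo τ G) ∈ I} := by
    refine Finite.of_injective
      (fun G => (⟨G.1, (MvPolynomial.mem_restrictTotalDegree _ _ _).mpr G.2.1⟩ :
        MvPolynomial.restrictTotalDegree (Fin n) Fq τ)) ?_
    intro a b hab
    rwa [Subtype.mk_eq_mk, ← Subtype.ext_iff] at hab
  rcases isEmpty_or_nonempty {G : MvPolynomial (Fin n) Fq // G.totalDegree ≤ τ ∧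
      MvPolynomial.map (algebraMap Fq (AlgebraicClosure (ZMod p)))
        (homogenizeTo (l - 1) (F₀ + G ^ p)) ∈ I} with he | hne
  · simp [Nat.card_of_isEmpty]
  obtain ⟨⟨G₀, hG₀d, hG₀⟩⟩ := hne
  have hple : p * τ ≤ l - 1 := by
    subst hτ
    rw [mul_comm]
    exact Nat.div_mul_le_self _ _
  set r : ℕ := l - 1 - p * τ with hr
  have hlr : l - 1 = p * τ + r := by omega
  have key : ∀ G : MvPolynomial (Fin n) Fq, G.totalDegree ≤ τ →
      MvPolynomial.map (algebraMap Fq (AlgebraicClosure (ZMod p)))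
        (homogenizeTo (l - 1) (F₀ + G ^ p)) ∈ I →
      MvPolynomial.map (algebraMap Fq (AlgebraicClosure (ZMod p)))
        (homogenizeTo τ (G - G₀)) ∈ I := by
    intro G hGd hG
    have hdiff := I.sub_mem hG hG₀
    rw [← map_sub, ← homogenizeTo_sub] at hdiff
    have e1 : (F₀ + G ^ p) - (F₀ + G₀ ^ p) = (G - G₀) ^ p := by
      rw [sub_pow_char]
      ring
    rw [e1] at hdiff
    have hHd : (G - G₀).totalDegree ≤ τ :=
      (MvPolynomial.totalDegree_sub G G₀).trans (max_le hGd hG₀d)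
    rw [hlr, homogenizeTo_pow_char p hHd r, map_mul, map_pow, map_pow,
      MvPolynomial.map_X] at hdiff
    rcases hIprime.mem_or_mem hdiff with h1 | h2
    · exact hIprime.mem_of_pow_mem _ h1
    · exact absurd (hIprime.mem_of_pow_mem _ h2) hnot
  refine Nat.card_le_card_of_injective
    (fun G => ⟨G.1 - G₀, (MvPolynomial.totalDegree_sub _ _).trans
      (max_le G.2.1 hG₀d), key G.1 G.2.1 G.2.2⟩) ?_
  intro a b hab
  rwa [Subtype.mk_eq_mk, sub_left_inj, ← Subtype.ext_iff] at hab
end
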